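/- Let n ≥ 2 and a > 0. The function F(φ) = ∑_{j=0}^{n-1} (-1)^{n-j-1} (n!/j!) φ^j e^φ is strictly increasing on (a, ∞), and hence for C = ∑_{j=0}^{n-1} (-1)^{n-j-1} (n!/j!) a^j e^a, the equation F(φ) = e^{nt} + C has for each t ∈ ℝ a unique solution φ(t) > a, with φ(t) → a as t → -∞. -/

import Mathlib

open Finset Filter Real

/-- For `n ≥ 2` and `a > 0`, the function
`F φ = ∑_{j=0}^{n-1} (-1)^{n-j-1} (n!/j!) φ^j e^φ` is strictly increasing on
`(a,∞)`; hence, with `C = F a`, the equation `F φ = e^{nt} + C` has for each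
`t` a unique solution `φ(t) > a`, and any such solution function tends to `a`
as `t → -∞`. -/
theorem stmt_10 (n : ℕ) (hn : 2 ≤ n) (a : ℝ) (ha : 0 < a) (F : ℝ → ℝ)
    (hF : ∀ x : ℝ, F x =
      ∑ j ∈ Finset.range n,
        (-1 : ℝ) ^ (n - j - 1) * ((n.factorial : ℝ) / (j.factorial : ℝ)) * x ^ j * Real.exp x) :
    StrictMonoOn F (Set.Ioi a) ∧
      (∀ t : ℝ, ∃! p : ℝ, p ∈ Set.Ioi a ∧ F p = Real.exp (n * t) + F a) ∧
      ∀ ψ : ℝ → ℝ, (∀ t : ℝ, ψ t ∈ Set.Ioi a ∧ F (ψ t) = Real.exp (n * t) + F a) →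
        Tendsto ψ atBot (nhds a) := by
  obtain ⟨m, rfl⟩ : ∃ m, n = m + 2 := ⟨n - 2, by omega⟩
  set n := m + 2 with hn2
  set c : ℕ → ℝ := fun j => (-1 : ℝ) ^ (n - j - 1) * ((n.factorial : ℝ) / (j.factorial : ℝ))
    with hc
  -- key combinatorial identity
  have key : ∀ i : ℕ, i ≤ m → c (i + 1) * ((i + 1 : ℕ) : ℝ) = - c i := by
    intro i hi
    have e1 : n - (i + 1) - 1 = m - i := by omega
    have e2 : n - i - 1 = (m - i) + 1 := by omega
    have hfac : ((i + 1).factorial : ℝ) = ((i : ℝ) + 1) * (i.factorial : ℝ) := by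
      rw [Nat.factorial_succ]; push_cast; ring
    have hifz : (i.factorial : ℝ) ≠ 0 := Nat.cast_ne_zero.2 (Nat.factorial_ne_zero i)
    have hipz : ((i : ℝ) + 1) ≠ 0 := by positivity
    simp only [hc, e1, e2, pow_succ, hfac]
    push_cast
    field_simp
  have hcn : c (m + 1) = (n : ℝ) := by
    have e1 : n - (m + 1) - 1 = 0 := by omega
    have hfac : (n.factorial : ℝ) = ((m : ℝ) + 2) * ((m + 1).factorial : ℝ) := by
      rw [show n = (m + 1) + 1 from rfl, Nat.factorial_succ]; push_cast; ring
    have hfz : (((m + 1).factorial : ℝ)) ≠ 0 := Nat.cast_ne_zero.2 (Nat.factorial_ne_zero _)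
    simp only [hc, e1, pow_zero, one_mul, hfac]
    rw [mul_div_assoc, div_self hfz]
    rw [hn2]; push_cast; ring
  -- derivative
  have hdF : ∀ x : ℝ, HasDerivAt F ((n : ℝ) * x ^ (n - 1) * Real.exp x) x := by
    intro x
    have hg : HasDerivAt (fun x : ℝ => ∑ j ∈ Finset.range n, c j * x ^ j * Real.exp x)
        (∑ j ∈ Finset.range n,
          ((c j * ((j : ℝ) * x ^ (j - 1))) * Real.exp x + (c j * x ^ j) * Real.exp x)) x := by
      apply HasDerivAt.fun_sum
      intro j _
      exact ((hasDerivAt_pow j x).const_mul (c j)).mul (Real.hasDerivAt_exp x)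
    have hsum : ∑ j ∈ Finset.range n,
        ((c j * ((j : ℝ) * x ^ (j - 1))) * Real.exp x + (c j * x ^ j) * Real.exp x)
        = (n : ℝ) * x ^ (n - 1) * Real.exp x := by
      rw [show n = (m + 1) + 1 from rfl, Finset.sum_range_succ']
      have step : ∀ i ∈ Finset.range (m + 1),
          ((c (i+1) * (((i+1 : ℕ) : ℝ) * x ^ ((i+1) - 1))) * Real.exp x
            + (c (i+1) * x ^ (i+1)) * Real.exp x)
          = (fun k => c k * x ^ k * Real.exp x) (i + 1)
            - (fun k => c k * x ^ k * Real.exp x) i := by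
        intro i hi
        have hi' : i ≤ m := by simpa using Nat.lt_succ_iff.mp (Finset.mem_range.mp hi)
        have hk := key i hi'
        simp only [Nat.add_sub_cancel]
        rw [show c (i+1) * (((i+1 : ℕ) : ℝ) * x ^ i) = (c (i+1) * ((i+1 : ℕ) : ℝ)) * x ^ i by ring,
          hk]
        ring
      rw [Finset.sum_congr rfl step, Finset.sum_range_sub (fun k => c k * x ^ k * Real.exp x)]
      simp only [Nat.cast_zero, zero_mul, mul_zero, zero_mul, pow_zero, mul_one]
      rw [hcn, show n - 1 = m + 1 from rfl]
      ring
    rw [hsum] at hg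
    exact hg.congr_of_eventuallyEq (Filter.Eventually.of_forall fun y => (hF y))
  have hdiff : Differentiable ℝ F := fun x => (hdF x).differentiableAt
  have hcont : Continuous F := hdiff.continuous
  -- strict mono on Ici a
  have hmono : StrictMonoOn F (Set.Ici a) := by
    apply strictMonoOn_of_deriv_pos (convex_Ici a) hcont.continuousOn
    intro x hx
    rw [interior_Ici] at hx
    rw [(hdF x).deriv]
    have hx0 : 0 < x := lt_trans ha hx
    positivity
  -- linear lower bound
  set K : ℝ := (n : ℝ) * a ^ (n - 1) * Real.exp a with hK
  have hK0 : 0 < K := by positivity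
  have hdG : ∀ y : ℝ, HasDerivAt (fun x => F x - K * x) ((n : ℝ) * y ^ (n - 1) * Real.exp y - K) y := by
    intro y
    have h := (hdF y).sub ((hasDerivAt_id y).const_mul K)
    simp only [mul_one] at h
    exact h
  have hlin : ∀ x : ℝ, a ≤ x → F a + K * (x - a) ≤ F x := by
    intro x hax
    have hG : MonotoneOn (fun x => F x - K * x) (Set.Ici a) := by
      apply monotoneOn_of_deriv_nonneg (convex_Ici a)
      · exact (hcont.sub (continuous_const.mul continuous_id)).continuousOn
      · intro y hy
        exact (hdG y).differentiableAt.differentiableWithinAt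
      · intro y hy
        rw [interior_Ici] at hy
        rw [(hdG y).deriv]
        have hay : a ≤ y := le_of_lt hy
        have : K ≤ (n : ℝ) * y ^ (n - 1) * Real.exp y := by
          rw [hK]
          have h1 : a ^ (n - 1) ≤ y ^ (n - 1) := pow_le_pow_left₀ ha.le hay _
          have h2 : Real.exp a ≤ Real.exp y := Real.exp_le_exp.2 hay
          have h3 : a ^ (n - 1) * Real.exp a ≤ y ^ (n - 1) * Real.exp y :=
            mul_le_mul h1 h2 (Real.exp_pos a).le (pow_nonneg (by linarith) _)
          rw [mul_assoc, mul_assoc]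
          exact mul_le_mul_of_nonneg_left h3 (by positivity)
        linarith
    have := hG (Set.self_mem_Ici) (Set.mem_Ici.2 hax) hax
    simp only at this
    linarith
  -- main conclusions
  refine ⟨hmono.mono Set.Ioi_subset_Ici_self, ?_, ?_⟩
  · intro t
    set y : ℝ := Real.exp ((n : ℝ) * t) + F a with hy
    have hylt : F a < y := by
      have := Real.exp_pos ((n : ℝ) * t); rw [hy]; linarith
    set b : ℝ := a + (y - F a) / K with hb
    have hab : a ≤ b := by
      rw [hb]
      have : 0 < (y - F a) / K := div_pos (by linarith) hK0
      linarith
    have hFb : y ≤ F b := by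
      have := hlin b hab
      rw [hb] at this ⊢
      rw [show a + (y - F a)/K - a = (y - F a)/K by ring] at this
      rw [mul_div_cancel₀ _ (ne_of_gt hK0)] at this
      linarith
    obtain ⟨p, hp, hFp⟩ := intermediate_value_Icc hab hcont.continuousOn
      (Set.mem_Icc.2 ⟨le_of_lt hylt, hFb⟩)
    have hpa : a < p := by
      rcases lt_or_eq_of_le hp.1 with h | h
      · exact h
      · exfalso; rw [← h] at hFp; rw [hFp] at hylt; exact lt_irrefl _ hylt
    refine ⟨p, ⟨Set.mem_Ioi.2 hpa, hFp⟩, ?_⟩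
    rintro q ⟨hq1, hq2⟩
    exact hmono.injOn (Set.mem_Ici.2 (le_of_lt (Set.mem_Ioi.mp hq1)))
      (Set.mem_Ici.2 (le_of_lt hpa)) (hq2.trans hFp.symm)
  · intro ψ hψ
    rw [tendsto_order]
    constructor
    · intro b hb
      exact Filter.Eventually.of_forall fun t => lt_trans hb (Set.mem_Ioi.mp (hψ t).1)
    · intro b hb
      have hFab : F a < F b := hmono Set.self_mem_Ici (Set.mem_Ici.2 (le_of_lt hb)) hb
      have htend : Tendsto (fun t : ℝ => Real.exp ((n : ℝ) * t)) atBot (nhds 0) := by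
        apply Real.tendsto_exp_atBot.comp
        exact Tendsto.const_mul_atBot (by positivity : (0:ℝ) < (n:ℝ)) tendsto_id
      have hev : ∀ᶠ t in atBot, Real.exp ((n : ℝ) * t) < F b - F a :=
        htend.eventually (gt_mem_nhds (by linarith : (0:ℝ) < F b - F a))
      filter_upwards [hev] with t ht
      have h1 := (hψ t).2
      have h2 : F (ψ t) < F b := by rw [h1]; linarith
      have hψa : a < ψ t := Set.mem_Ioi.mp (hψ t).1
      exact (hmono.lt_iff_lt (Set.mem_Ici.2 (le_of_lt hψa)) (Set.mem_Ici.2 (le_of_lt hb))).mp h2
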